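/- Let κ, λ ∈ (0,1), let Γ be the set of bounded measures on [n] of density at least κ, let μ₁ be the measure with μ₁(i) = κ for all i, and let ℓ₁,…,ℓ_T : [n] → [0,1] be loss vectors. Define the unprojected measure μ̃_{T+1}(i) = e^{−λ·Σ_{t=1}^T ℓ_t(i)}·μ₁(i) and let μ_{T+1} = Π_Γ μ̃_{T+1} be its Bregman projection onto Γ. Then μ_{T+1} minimizes, over all μ ∈ Γ, the objective λ·|μ|·Σ_{t=1}^T M(μ̂, ℓ_t) + KL(μ‖μ₁), where M(μ̂, ℓ_t) = Σᵢ μ̂(i)·ℓ_t(i). -/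

import Mathlib

/-- KL divergence between bounded measures on `Fin n`. -/
noncomputable def KLdiv {n : ℕ} (μ₁ μ₂ : Fin n → ℝ) : ℝ :=
  ∑ i, (μ₁ i * Real.log (μ₁ i / μ₂ i) + μ₂ i - μ₁ i)

/-- A bounded measure on `[n]` is a function into `[0,1]`. -/
def IsBddMeasure {n : ℕ} (μ : Fin n → ℝ) : Prop := ∀ i, μ i ∈ Set.Icc (0:ℝ) 1

/-- `ν` is the Bregman projection of `μ̃` onto the set `Γ` of κ-dense bounded
measures: it lies in `Γ` and minimizes `KL(·‖μ̃)` there. -/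
def IsBregmanProj {n : ℕ} (κ : ℝ) (μt ν : Fin n → ℝ) : Prop :=
  (IsBddMeasure ν ∧ κ * n ≤ ∑ i, ν i) ∧
    ∀ ρ : Fin n → ℝ, IsBddMeasure ρ → κ * n ≤ ∑ i, ρ i → KLdiv ν μt ≤ KLdiv ρ μt

/-- The regularized objective equals `KL(μ‖μ̃)` plus a constant not depending on `μ`. -/
lemma obj_eq_KL {n T : ℕ} (κ lam : ℝ) (hκ : 0 < κ)
    (μ₁ : Fin n → ℝ) (hμ₁ : ∀ i, μ₁ i = κ)
    (ℓ : Fin T → Fin n → ℝ)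
    (μ : Fin n → ℝ) (hμ : ∀ i, 0 ≤ μ i) (hsum : (0:ℝ) < ∑ i, μ i) :
    lam * (∑ i, μ i) * (∑ t, ∑ i, (μ i / ∑ k, μ k) * ℓ t i) + KLdiv μ μ₁
      = KLdiv μ (fun i => Real.exp (-lam * ∑ t, ℓ t i) * μ₁ i)
        + ∑ i, (μ₁ i - Real.exp (-lam * ∑ t, ℓ t i) * μ₁ i) := by
  have hS : (∑ i, μ i) ≠ 0 := hsum.ne'
  rw [Finset.sum_comm (s := Finset.univ) (t := Finset.univ)]
  unfold KLdiv
  rw [show (∑ i, ∑ t, (μ i / ∑ k, μ k) * ℓ t i) = ∑ i, (μ i / ∑ k, μ k) * ∑ t, ℓ t i by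
      exact Finset.sum_congr rfl fun i _ => (Finset.mul_sum _ _ _).symm,
    Finset.mul_sum, ← Finset.sum_add_distrib, ← Finset.sum_add_distrib]
  refine Finset.sum_congr rfl fun i _ => ?_
  have hexp : Real.exp (-lam * ∑ t, ℓ t i) ≠ 0 := Real.exp_ne_zero _
  have key : μ i * Real.log (μ i / (Real.exp (-lam * ∑ t, ℓ t i) * μ₁ i))
      = μ i * Real.log (μ i / μ₁ i) + lam * μ i * (∑ t, ℓ t i) := by
    rcases (hμ i).eq_or_lt with h | h
    · simp [← h]
    · have h1 : μ i / (Real.exp (-lam * ∑ t, ℓ t i) * μ₁ i)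
          = (μ i / μ₁ i) * Real.exp (lam * ∑ t, ℓ t i) := by
        rw [neg_mul, Real.exp_neg, hμ₁ i]
        field_simp
      rw [h1, Real.log_mul (div_ne_zero h.ne' (by rw [hμ₁ i]; exact hκ.ne'))
        (Real.exp_ne_zero _), Real.log_exp]
      ring
  rw [key]
  have : lam * (∑ k, μ k) * ((μ i / ∑ k, μ k) * ∑ t, ℓ t i)
      = lam * μ i * (∑ t, ℓ t i) := by
    field_simp
  rw [this]
  ring

/-- **Lazy dense updates minimize the regularized loss.**  The lazily projected
multiplicative-weights measure `μ_{T+1} = Π_Γ(e^{−λΣ_t ℓ_t}·μ₁)` minimizes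
`λ|μ|·Σ_t M(μ̂, ℓ_t) + KL(μ‖μ₁)` over all κ-dense measures `μ`. -/
theorem lazy_dense_update_minimizes_regularized_loss {n : ℕ} {T : ℕ}
    (κ lam : ℝ) (hκ : κ ∈ Set.Ioo (0:ℝ) 1) (hlam : lam ∈ Set.Ioo (0:ℝ) 1)
    (μ₁ : Fin n → ℝ) (hμ₁ : ∀ i, μ₁ i = κ)
    (ℓ : Fin T → Fin n → ℝ) (hℓ : ∀ t i, ℓ t i ∈ Set.Icc (0:ℝ) 1)
    (μproj : Fin n → ℝ)
    (hproj : IsBregmanProj κ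
      (fun i => Real.exp (-lam * ∑ t, ℓ t i) * μ₁ i) μproj) :
    ∀ μ : Fin n → ℝ, IsBddMeasure μ → κ * n ≤ ∑ i, μ i →
      lam * (∑ i, μproj i) * (∑ t, ∑ i, (μproj i / ∑ k, μproj k) * ℓ t i)
          + KLdiv μproj μ₁ ≤
        lam * (∑ i, μ i) * (∑ t, ∑ i, (μ i / ∑ k, μ k) * ℓ t i)
          + KLdiv μ μ₁ := by
  intro μ hμ hμd
  rcases Nat.eq_zero_or_pos n with hn | hn
  · subst hn
    simp [KLdiv]
  · have hnpos : (0:ℝ) < κ * n := mul_pos hκ.1 (by exact_mod_cast hn)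
    have h1 := obj_eq_KL κ lam hκ.1 μ₁ hμ₁ ℓ μproj
      (fun i => (hproj.1.1 i).1) (lt_of_lt_of_le hnpos hproj.1.2)
    have h2 := obj_eq_KL κ lam hκ.1 μ₁ hμ₁ ℓ μ
      (fun i => (hμ i).1) (lt_of_lt_of_le hnpos hμd)
    rw [h1, h2]
    linarith [hproj.2 μ hμ hμd]
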